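/- Let P_m be a homogeneous polynomial on ℝⁿ of degree m ≥ 2 and suppose there exists a ≠ 0 such that (1 + a²)ΔP_m − a² P_{m,x_1 x_1} = 0 and P_{m,x_1} ΔP_m − ∑_{i=1}^n P_{m,x_i x_1} P_{m,x_i} = 0 hold on ℝⁿ. Then the function (1/(1+a²)) P_{m,x_1}² + ∑_{i=2}^n P_{m,x_i}² is independent of x_1, and consequently P_m is independent of x_1. -/

import Mathlib

open MvPolynomial

section Aux

lemma coeff_pderiv_aux {σ : Type*} [DecidableEq σ] (i : σ) (u : σ →₀ ℕ)
    (p : MvPolynomial σ ℝ) :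
    MvPolynomial.coeff u (pderiv i p)
      = ((u i : ℝ) + 1) * MvPolynomial.coeff (u + Finsupp.single i 1) p := by
  induction p using MvPolynomial.induction_on' with
  | monomial s a =>
    rw [pderiv_monomial, MvPolynomial.coeff_monomial, MvPolynomial.coeff_monomial]
    by_cases h : s = u + Finsupp.single i 1
    · subst h
      have h1 : u + Finsupp.single i 1 - Finsupp.single i 1 = u := by
        ext j; simp
      rw [if_pos h1, if_pos rfl]
      rw [Finsupp.add_apply, Finsupp.single_eq_same]
      push_cast
      ring
    · rw [if_neg h]
      by_cases h2 : s - Finsupp.single i 1 = u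
      · have hsi : s i = 0 := by
          by_contra hne
          apply h
          have hle : Finsupp.single i 1 ≤ s :=
            Finsupp.single_le_iff.mpr (Nat.one_le_iff_ne_zero.mpr hne)
          rw [← tsub_add_cancel_of_le hle, h2]
        rw [if_pos h2, hsi]
        push_cast
        ring
      · rw [if_neg h2]; ring
  | add p q hp hq =>
    simp only [map_add, MvPolynomial.coeff_add, hp, hq]
    ring

lemma pderiv_comm_aux {σ : Type*} [DecidableEq σ] (i j : σ) (p : MvPolynomial σ ℝ) :
    pderiv i (pderiv j p) = pderiv j (pderiv i p) := by
  apply MvPolynomial.ext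
  intro u
  rw [coeff_pderiv_aux, coeff_pderiv_aux, coeff_pderiv_aux, coeff_pderiv_aux]
  by_cases h : i = j
  · subst h; rfl
  · have h1 : (u + Finsupp.single j 1 : σ →₀ ℕ) i = u i := by
      rw [Finsupp.add_apply, Finsupp.single_apply, if_neg (Ne.symm h), add_zero]
    have h2 : (u + Finsupp.single i 1 : σ →₀ ℕ) j = u j := by
      rw [Finsupp.add_apply, Finsupp.single_apply, if_neg h, add_zero]
    have h3 : u + Finsupp.single j 1 + Finsupp.single i 1
        = u + Finsupp.single i 1 + Finsupp.single j 1 := by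
      rw [add_assoc, add_assoc, add_comm (Finsupp.single j 1)]
    rw [h1, h2, h3]
    ring

/-- A real polynomial whose square is bounded has zero derivative. -/
lemma derivative_eq_zero_of_sq_bounded (q : Polynomial ℝ) (B : ℝ)
    (h : ∀ t : ℝ, (q.eval t) ^ 2 ≤ B) : Polynomial.derivative q = 0 := by
  by_cases hq : q.natDegree = 0
  · obtain ⟨a, rfl⟩ := Polynomial.natDegree_eq_zero.mp hq
    simp
  · exfalso
    have hq0 : q ≠ 0 := fun hz => hq (by simp [hz])
    have hdeg : 0 < (q ^ 2).degree := by
      rw [← Polynomial.natDegree_pos_iff_degree_pos, Polynomial.natDegree_pow]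
      have : 0 < q.natDegree := Nat.pos_of_ne_zero hq
      omega
    have hlc : 0 ≤ (q ^ 2).leadingCoeff := by
      rw [Polynomial.leadingCoeff_pow]
      positivity
    have htend := Polynomial.tendsto_atTop_of_leadingCoeff_nonneg (q ^ 2) hdeg hlc
    obtain ⟨t, ht⟩ := (htend.eventually_gt_atTop B).exists
    have := h t
    rw [show (q.eval t) ^ 2 = (q ^ 2).eval t by simp] at this
    linarith

variable {n : ℕ}

/-- Restriction of a multivariate polynomial to the line through `x` in direction `e₀`. -/
noncomputable def lineP (x : Fin (n + 1) → ℝ) :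
    MvPolynomial (Fin (n + 1)) ℝ →ₐ[ℝ] Polynomial ℝ :=
  MvPolynomial.aeval (fun i => if i = 0 then Polynomial.X else Polynomial.C (x i))

lemma lineP_eval (x : Fin (n + 1) → ℝ) (p : MvPolynomial (Fin (n + 1)) ℝ) (t : ℝ) :
    (lineP x p).eval t = MvPolynomial.eval (Function.update x 0 t) p := by
  induction p using MvPolynomial.induction_on with
  | C a => simp [lineP]
  | add p q hp hq => simp [map_add, hp, hq]
  | mul_X p j hp =>
    rw [map_mul, map_mul, Polynomial.eval_mul, hp]
    congr 1
    simp only [lineP, MvPolynomial.aeval_X, MvPolynomial.eval_X]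
    by_cases hj : j = 0
    · subst hj; simp
    · simp [hj, Function.update_apply]

lemma lineP_pderiv (x : Fin (n + 1) → ℝ) (p : MvPolynomial (Fin (n + 1)) ℝ) :
    lineP x (pderiv 0 p) = Polynomial.derivative (lineP x p) := by
  induction p using MvPolynomial.induction_on with
  | C a => simp [lineP]
  | add p q hp hq => simp [map_add, hp, hq]
  | mul_X p j hp =>
    rw [pderiv_mul, map_add, map_mul, map_mul, hp, map_mul, Polynomial.derivative_mul]
    congr 1
    congr 1
    by_cases hj : j = 0
    · subst hj
      simp [lineP]
    · rw [pderiv_X_of_ne hj]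
      simp only [lineP, MvPolynomial.aeval_X, if_neg hj]
      simp

/-- Key analytic step: if the derivative in direction 0 of
`C c * Q ^ 2 + ∑ P i ^ 2` vanishes (with `c > 0`), then each of the summands is
independent of the variable `0`. -/
lemma key_step {c : ℝ} (hc : 0 < c) (Q : MvPolynomial (Fin (n + 1)) ℝ)
    (P : Fin (n + 1) → MvPolynomial (Fin (n + 1)) ℝ)
    (H : pderiv 0 (C c * Q ^ 2
      + ∑ i ∈ Finset.univ.erase (0 : Fin (n + 1)), (P i) ^ 2) = 0) :
    pderiv 0 Q = 0 ∧
      ∀ i ∈ Finset.univ.erase (0 : Fin (n + 1)), pderiv 0 (P i) = 0 := by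
  set G : MvPolynomial (Fin (n + 1)) ℝ :=
    C c * Q ^ 2 + ∑ i ∈ Finset.univ.erase (0 : Fin (n + 1)), (P i) ^ 2 with hG
  -- pointwise statement
  have main : ∀ x : Fin (n + 1) → ℝ,
      MvPolynomial.eval x (pderiv 0 Q) = 0 ∧
      ∀ i ∈ Finset.univ.erase (0 : Fin (n + 1)),
        MvPolynomial.eval x (pderiv 0 (P i)) = 0 := by
    intro x
    have hder : Polynomial.derivative (lineP x G) = 0 := by
      rw [← lineP_pderiv, H, map_zero]
    have hCform := Polynomial.eq_C_of_derivative_eq_zero hder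
    set k : ℝ := (lineP x G).coeff 0 with hk
    have hGeval : ∀ t : ℝ,
        c * ((lineP x Q).eval t) ^ 2
          + ∑ i ∈ Finset.univ.erase (0 : Fin (n + 1)), ((lineP x (P i)).eval t) ^ 2
          = k := by
      intro t
      have h1 : (lineP x G).eval t = k := by rw [hCform]; simp
      rw [← h1, hG]
      simp only [map_add, map_mul, map_pow, map_sum, Polynomial.eval_add,
        Polynomial.eval_mul, Polynomial.eval_pow, Polynomial.eval_finset_sum]
      congr 1
      simp [lineP, MvPolynomial.algHom_C, Polynomial.algebraMap_eq]
    have hsum_nonneg : ∀ t : ℝ,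
        (0 : ℝ) ≤ ∑ i ∈ Finset.univ.erase (0 : Fin (n + 1)),
          ((lineP x (P i)).eval t) ^ 2 := by
      intro t
      exact Finset.sum_nonneg fun i _ => sq_nonneg _
    -- bound for Q
    have hQbound : ∀ t : ℝ, ((lineP x Q).eval t) ^ 2 ≤ k / c := by
      intro t
      have h := hGeval t
      have h2 := hsum_nonneg t
      rw [le_div_iff₀ hc, mul_comm]
      linarith
    have hQder : Polynomial.derivative (lineP x Q) = 0 :=
      derivative_eq_zero_of_sq_bounded _ _ hQbound
    have hQzero : MvPolynomial.eval x (pderiv 0 Q) = 0 := by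
      have h := congrArg (Polynomial.eval (x 0)) ((lineP_pderiv x Q).trans hQder)
      rw [lineP_eval, Function.update_eq_self] at h
      simpa using h
    refine ⟨hQzero, fun i hi => ?_⟩
    have hPbound : ∀ t : ℝ, ((lineP x (P i)).eval t) ^ 2 ≤ k := by
      intro t
      have h := hGeval t
      have h2 : ((lineP x (P i)).eval t) ^ 2
          ≤ ∑ j ∈ Finset.univ.erase (0 : Fin (n + 1)), ((lineP x (P j)).eval t) ^ 2 :=
        Finset.single_le_sum (f := fun j => ((lineP x (P j)).eval t) ^ 2)
          (fun j _ => sq_nonneg _) hi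
      nlinarith [sq_nonneg ((lineP x Q).eval t)]
    have hPder : Polynomial.derivative (lineP x (P i)) = 0 :=
      derivative_eq_zero_of_sq_bounded _ _ hPbound
    have h := congrArg (Polynomial.eval (x 0)) ((lineP_pderiv x (P i)).trans hPder)
    rw [lineP_eval, Function.update_eq_self] at h
    simpa using h
  constructor
  · apply MvPolynomial.funext
    intro x
    simpa using (main x).1
  · intro i hi
    apply MvPolynomial.funext
    intro x
    simpa using (main x).2 i hi

end Aux

/-- If `P_m` is homogeneous of degree `m ≥ 2` on `ℝⁿ` (with `n ≥ 1`; `x_1` is coordinate `0`)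
and for some `a ≠ 0` the two equations
`(1 + a²) ΔP_m − a² P_{m,x₁x₁} = 0` and
`P_{m,x₁} ΔP_m − ∑ᵢ P_{m,xᵢx₁} P_{m,xᵢ} = 0`
hold, then `(1/(1+a²)) P_{m,x₁}² + ∑_{i≥2} P_{m,xᵢ}²` is independent of `x₁`,
and consequently `P_m` is independent of `x₁`. -/
theorem stmt7 {n : ℕ} (m : ℕ) (hm : 2 ≤ m) (a : ℝ) (ha : a ≠ 0)
    (Pm : MvPolynomial (Fin (n + 1)) ℝ) (hhom : Pm.IsHomogeneous m)
    (heqi : C (1 + a ^ 2) * (∑ i : Fin (n + 1), pderiv i (pderiv i Pm))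
      - C (a ^ 2) * pderiv 0 (pderiv 0 Pm) = 0)
    (heqii : pderiv 0 Pm * (∑ i : Fin (n + 1), pderiv i (pderiv i Pm))
      - ∑ i : Fin (n + 1), pderiv 0 (pderiv i Pm) * pderiv i Pm = 0) :
    pderiv 0 (C (1 / (1 + a ^ 2)) * (pderiv 0 Pm) ^ 2
        + ∑ i ∈ Finset.univ.erase (0 : Fin (n + 1)), (pderiv i Pm) ^ 2) = 0
    ∧ pderiv 0 Pm = 0 := by
  have ha2 : (0 : ℝ) < 1 + a ^ 2 := by positivity
  have ha2' : (1 : ℝ) + a ^ 2 ≠ 0 := ne_of_gt ha2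
  set S : MvPolynomial (Fin (n + 1)) ℝ := ∑ i : Fin (n + 1), pderiv i (pderiv i Pm) with hS
  set Q : MvPolynomial (Fin (n + 1)) ℝ := pderiv 0 Pm with hQ
  set D : MvPolynomial (Fin (n + 1)) ℝ := pderiv 0 Q with hD
  set T : MvPolynomial (Fin (n + 1)) ℝ :=
    ∑ i ∈ Finset.univ.erase (0 : Fin (n + 1)), pderiv 0 (pderiv i Pm) * pderiv i Pm with hT
  have hsplit : ∑ i : Fin (n + 1), pderiv 0 (pderiv i Pm) * pderiv i Pm = D * Q + T :=
    (Finset.add_sum_erase _ (fun i => pderiv 0 (pderiv i Pm) * pderiv i Pm)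
      (Finset.mem_univ 0)).symm
  have h2 : Q * S - (D * Q + T) = 0 := by rw [← hsplit]; exact heqii
  have h1 : (1 + C (a ^ 2)) * S - C (a ^ 2) * D = 0 := by
    have : (C (1 + a ^ 2) : MvPolynomial (Fin (n + 1)) ℝ) = 1 + C (a ^ 2) := by
      rw [map_add, map_one]
    rw [← this]
    exact heqi
  have hCc : (C (1 / (1 + a ^ 2)) : MvPolynomial (Fin (n + 1)) ℝ) * (1 + C (a ^ 2)) = 1 := by
    have h : (1 + C (a ^ 2) : MvPolynomial (Fin (n + 1)) ℝ) = C (1 + a ^ 2) := by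
      rw [map_add, map_one]
    rw [h, ← map_mul, one_div_mul_cancel ha2', map_one]
  have hEXP : pderiv 0 (C (1 / (1 + a ^ 2)) * Q ^ 2
      + ∑ i ∈ Finset.univ.erase (0 : Fin (n + 1)), (pderiv i Pm) ^ 2)
      = C (1 / (1 + a ^ 2)) * (2 * Q * D) + 2 * T := by
    rw [map_add, pderiv_C_mul, map_sum]
    congr 1
    · rw [pderiv_pow, ← hD]
      push_cast
      ring
    · rw [hT, Finset.mul_sum]
      apply Finset.sum_congr rfl
      intro i _
      rw [pderiv_pow]
      push_cast
      ring
  have hne : (1 + C (a ^ 2) : MvPolynomial (Fin (n + 1)) ℝ) ≠ 0 := by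
    have h : (1 + C (a ^ 2) : MvPolynomial (Fin (n + 1)) ℝ) = C (1 + a ^ 2) := by
      rw [map_add, map_one]
    rw [h]
    intro hcon
    exact ha2' (MvPolynomial.C_injective _ _ (by rw [hcon, map_zero]))
  have hz : (1 + C (a ^ 2)) * (C (1 / (1 + a ^ 2)) * (2 * Q * D) + 2 * T) = 0 := by
    linear_combination (2 * Q * D) * hCc - (2 * (1 + C (a ^ 2))) * h2 + (2 * Q) * h1
  have hfirst : pderiv 0 (C (1 / (1 + a ^ 2)) * Q ^ 2
      + ∑ i ∈ Finset.univ.erase (0 : Fin (n + 1)), (pderiv i Pm) ^ 2) = 0 := by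
    rw [hEXP]
    rcases mul_eq_zero.mp hz with h | h
    · exact absurd h hne
    · exact h
  refine ⟨hfirst, ?_⟩
  -- now deduce that `pderiv 0 Pm = 0`
  have hcpos : (0 : ℝ) < 1 / (1 + a ^ 2) := by positivity
  obtain ⟨hQ0, hPi⟩ := key_step hcpos Q (fun i => pderiv i Pm) hfirst
  have hall : ∀ i : Fin (n + 1), pderiv i Q = 0 := by
    intro i
    by_cases hi : i = 0
    · subst hi; exact hQ0
    · rw [hQ, pderiv_comm_aux]
      exact hPi i (Finset.mem_erase.mpr ⟨hi, Finset.mem_univ i⟩)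
  apply MvPolynomial.ext
  intro d
  rw [MvPolynomial.coeff_zero]
  by_cases hd : d = 0
  · subst hd
    have h := coeff_pderiv_aux (0 : Fin (n + 1)) 0 Pm
    have hdeg : Finsupp.degree ((0 : Fin (n + 1) →₀ ℕ) + Finsupp.single 0 1) ≠ m := by
      rw [zero_add]
      have : Finsupp.degree (Finsupp.single (0 : Fin (n + 1)) 1) = 1 := by
        rw [Finsupp.degree_apply, Finsupp.support_single_ne_zero _ one_ne_zero]
        simp
      rw [this]
      omega
    show MvPolynomial.coeff 0 (pderiv 0 Pm) = 0
    rw [h, hhom.coeff_eq_zero hdeg, mul_zero]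
  · obtain ⟨i, hdi⟩ : ∃ i, d i ≠ 0 := by
      by_contra hcon
      push_neg at hcon
      exact hd (Finsupp.ext fun i => hcon i)
    have hle : Finsupp.single i 1 ≤ d :=
      Finsupp.single_le_iff.mpr (Nat.one_le_iff_ne_zero.mpr hdi)
    have hdd : d - Finsupp.single i 1 + Finsupp.single i 1 = d := tsub_add_cancel_of_le hle
    have h := coeff_pderiv_aux i (d - Finsupp.single i 1) Q
    rw [hall i, MvPolynomial.coeff_zero, hdd] at h
    have hnz : ∀ k : ℕ, ((k : ℝ) + 1) ≠ 0 := fun k => by positivity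
    rcases mul_eq_zero.mp h.symm with h' | h'
    · exact absurd h' (hnz _)
    · exact h'
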